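/- Let X be a real Hilbert space, let ρ > −1, and let A : X ⇉ X be ρ-comonotone such that ran(Id + A) = X. Then A is maximally ρ-comonotone. -/
import Mathlib


open RealInnerProductSpace

variable {X : Type*} [NormedAddCommGroup X] [InnerProductSpace ℝ X] [CompleteSpace X]

/-- `A` is `ρ`-comonotone. -/
def Comonotone (ρ : ℝ) (A : X → Set X) : Prop :=
  ∀ ⦃x u y v : X⦄, u ∈ A x → v ∈ A y → ρ * ‖u - v‖ ^ 2 ≤ ⟪x - y, u - v⟫

/-- `A` is maximally `ρ`-comonotone. -/
def MaxComonotone (ρ : ℝ) (A : X → Set X) : Prop :=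
  Comonotone ρ A ∧ ∀ B : X → Set X, Comonotone ρ B → (∀ x, A x ⊆ B x) → ∀ x, B x ⊆ A x

theorem stmt4 (A : X → Set X) (ρ : ℝ) (hρ : -1 < ρ) (hA : Comonotone ρ A)
    (hsurj : ∀ z : X, ∃ x u, u ∈ A x ∧ x + u = z) :
    MaxComonotone ρ A := by
  refine ⟨hA, fun B hB hsub y v hv => ?_⟩
  obtain ⟨x, u, hu, hxu⟩ := hsurj (y + v)
  have hxy : x - y = v - u := by
    have h := hxu
    rw [← sub_eq_zero] at h ⊢
    rw [← h]; abel
  have key := hB (hsub x hu) hv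
  rw [hxy] at key
  have hin : ⟪v - u, u - v⟫ = -‖u - v‖ ^ 2 := by
    rw [show v - u = -(u - v) by abel, inner_neg_left, real_inner_self_eq_norm_sq]
  rw [hin] at key
  have huv : u = v := by
    by_contra h
    have hne : u - v ≠ 0 := sub_ne_zero.mpr h
    have hpos : 0 < ‖u - v‖ ^ 2 :=
      pow_pos (norm_pos_iff.mpr hne) 2
    nlinarith
  have hxy' : x = y := by
    have : x - y = 0 := by rw [hxy, huv]; abel
    exact sub_eq_zero.mp this
  rw [hxy', huv] at hu
  exact hu
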